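/- Let P₁, P₂, τ₁, τ₂ > 0 satisfy τ₂·γ(P₁) ≤ τ₁·(γ(P₁+P₂) − γ(P₁)) (Case I), and let w ∈ [0,1]. Then for every (r₁, r₂) ∈ C₁ with r₁ > 0 and τ₁·r₂ ≤ τ₂·r₁, one has D₁(γ(P₁), (τ₂/τ₁)·γ(P₁)) ≤ D₁(r₁, r₂), where D₁(r₁, r₂) = (1−w)·τ₂/γ(P₂) + τ₁·(γ(P₂) − (1−w)·r₂)/(γ(P₂)·r₁). -/

import Mathlib

/-- γ(x) = (1/2)·log₂(1+x). -/
noncomputable def gam (x : ℝ) : ℝ := (1/2) * Real.logb 2 (1 + x)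

/-- The standard two-user Gaussian MAC capacity region. -/
def C1 (P₁ P₂ : ℝ) : Set (ℝ × ℝ) :=
  {r : ℝ × ℝ | 0 ≤ r.1 ∧ r.1 ≤ gam P₁ ∧ 0 ≤ r.2 ∧ r.2 ≤ gam P₂ ∧
    r.1 + r.2 ≤ gam (P₁ + P₂)}

/-- D₁(r₁, r₂) = (1−w)·τ₂/γ(P₂) + τ₁·(γ(P₂) − (1−w)·r₂)/(γ(P₂)·r₁). -/
noncomputable def D1 (w τ₁ τ₂ P₂ r₁ r₂ : ℝ) : ℝ :=
  (1 - w) * τ₂ / gam P₂ + τ₁ * (gam P₂ - (1 - w) * r₂) / (gam P₂ * r₁)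

theorem stmt_4 (P₁ P₂ τ₁ τ₂ w : ℝ) (hP₁ : 0 < P₁) (hP₂ : 0 < P₂)
    (hτ₁ : 0 < τ₁) (hτ₂ : 0 < τ₂)
    (hcase : τ₂ * gam P₁ ≤ τ₁ * (gam (P₁ + P₂) - gam P₁))
    (hw : w ∈ Set.Icc (0:ℝ) 1) :
    ∀ r₁ r₂ : ℝ, (r₁, r₂) ∈ C1 P₁ P₂ → 0 < r₁ → τ₁ * r₂ ≤ τ₂ * r₁ →
      D1 w τ₁ τ₂ P₂ (gam P₁) ((τ₂ / τ₁) * gam P₁) ≤ D1 w τ₁ τ₂ P₂ r₁ r₂ := by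
  intro r₁ r₂ hmem hr₁ hratio
  obtain ⟨_, hle1, _, _, _⟩ := hmem
  have g1 : 0 < gam P₁ := by
    have := Real.logb_pos (by norm_num : (1:ℝ) < 2) (by linarith : (1:ℝ) < 1 + P₁)
    unfold gam; linarith
  have g2 : 0 < gam P₂ := by
    have := Real.logb_pos (by norm_num : (1:ℝ) < 2) (by linarith : (1:ℝ) < 1 + P₂)
    unfold gam; linarith
  obtain ⟨hw0, hw1⟩ := hw
  unfold D1
  have h1 : (0:ℝ) < gam P₂ * gam P₁ := by positivity
  have h2 : (0:ℝ) < gam P₂ * r₁ := by positivity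
  apply add_le_add_right
  rw [div_le_div_iff₀ h1 h2]
  have key : τ₁ * (gam P₂ * (r₁ - gam P₁)) ≤ (1 - w) * (gam P₁ * (τ₂ * r₁ - τ₁ * r₂)) := by
    have hL : τ₁ * (gam P₂ * (r₁ - gam P₁)) ≤ 0 := by
      apply mul_nonpos_of_nonneg_of_nonpos (le_of_lt hτ₁)
      apply mul_nonpos_of_nonneg_of_nonpos (le_of_lt g2)
      linarith
    have hR : 0 ≤ (1 - w) * (gam P₁ * (τ₂ * r₁ - τ₁ * r₂)) := by
      apply mul_nonneg (by linarith)
      apply mul_nonneg (le_of_lt g1)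
      linarith
    linarith
  have hτ₁' : τ₁ ≠ 0 := ne_of_gt hτ₁
  field_simp
  nlinarith [mul_le_mul_of_nonneg_left key (le_of_lt g2)]
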